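/- Let κ, λ ∈ (0,1), let Γ be the set of bounded measures on [n] of density at least κ, let μ₁(i) = κ for all i, and let ℓ₁,…,ℓ_T : [n] → [0,1] be loss vectors. For each t define μ_t = Π_Γ( i ↦ e^{−λ·Σ_{s<t} ℓ_s(i)}·μ₁(i) ) (so μ₁ is the uniform κ measure). Then for every μ ∈ Γ, (1/T)·Σ_{t=1}^T M(μ̂_t, ℓ_t) ≤ (1/T)·Σ_{t=1}^T M(μ̂, ℓ_t) + λ + KL(μ‖μ₁)/(λκnT), where M(μ̂, ℓ) = Σᵢ μ̂(i)·ℓ(i). -/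

import Mathlib

/-- KL divergence between bounded measures on `Fin n`. -/
noncomputable def KLdiv {n : ℕ} (μ₁ μ₂ : Fin n → ℝ) : ℝ :=
  ∑ i, (μ₁ i * Real.log (μ₁ i / μ₂ i) + μ₂ i - μ₁ i)

/-- A bounded measure on `[n]` is a function into `[0,1]`. -/
def IsBddMeasure {n : ℕ} (μ : Fin n → ℝ) : Prop := ∀ i, μ i ∈ Set.Icc (0:ℝ) 1

/-- `ν` is the Bregman projection of `μ̃` onto the set `Γ` of κ-dense bounded
measures: it lies in `Γ` and minimizes `KL(·‖μ̃)` there. -/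
def IsBregmanProj {n : ℕ} (κ : ℝ) (μt ν : Fin n → ℝ) : Prop :=
  (IsBddMeasure ν ∧ κ * n ≤ ∑ i, ν i) ∧
    ∀ ρ : Fin n → ℝ, IsBddMeasure ρ → κ * n ≤ ∑ i, ρ i → KLdiv ν μt ≤ KLdiv ρ μt

open Real Finset

private lemma klAtom {x y : ℝ} (hx : 0 ≤ x) (hy : 0 < y) :
    x - y ≤ x * Real.log (x / y) := by
  rcases eq_or_lt_of_le hx with h | h
  · simp [← h]; linarith
  · have h1 : Real.log (y / x) ≤ y / x - 1 := Real.log_le_sub_one_of_pos (by positivity)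
    have h2 : Real.log (x / y) = - Real.log (y / x) := by
      rw [← Real.log_inv]; congr 1; field_simp
    rw [h2]
    have := mul_le_mul_of_nonneg_left h1 hx
    have hxy : x * (y / x - 1) = y - x := by field_simp
    nlinarith

private lemma KLdiv_nonneg {n : ℕ} {a b : Fin n → ℝ} (ha : ∀ i, 0 ≤ a i)
    (hb : ∀ i, 0 < b i) : 0 ≤ KLdiv a b := by
  unfold KLdiv
  apply Finset.sum_nonneg
  intro i _
  have := klAtom (ha i) (hb i)
  linarith

private lemma factA {s : ℝ} (h0 : 0 < s) (h1 : s ≤ 1) :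
    Real.log s ≤ s - 1 - (1 - s) ^ 2 / 2 := by
  set F : ℝ → ℝ := fun x => x - 1 - (1 - x) ^ 2 / 2 - Real.log x with hF
  have hder : ∀ x : ℝ, 0 < x → HasDerivAt F (2 - x - 1 / x) x := by
    intro x hx0
    have a1 : HasDerivAt (fun x : ℝ => 1 - x) (-1) x := (hasDerivAt_id x).const_sub 1
    have a2 := (a1.pow 2).div_const 2
    have a3 : HasDerivAt (fun x : ℝ => x - 1) 1 x := (hasDerivAt_id x).sub_const 1
    have a4 := Real.hasDerivAt_log hx0.ne'
    have := (a3.sub a2).sub a4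
    refine this.congr_deriv ?_
    field_simp
    ring
  have key : AntitoneOn F (Set.Icc s 1) := by
    apply antitoneOn_of_deriv_nonpos (convex_Icc s 1)
    · intro x hx
      exact (hder x (lt_of_lt_of_le h0 hx.1)).differentiableAt.continuousAt.continuousWithinAt
    · intro x hx
      rw [interior_Icc] at hx
      exact (hder x (lt_of_lt_of_le h0 hx.1.le)).differentiableAt.differentiableWithinAt
    · intro x hx
      rw [interior_Icc] at hx
      have hx0 : 0 < x := lt_of_lt_of_le h0 hx.1.le
      rw [(hder x hx0).deriv]
      have hkey : (2 - x - 1 / x) * x = -(x - 1) ^ 2 := by field_simp; ring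
      nlinarith [sq_nonneg (x - 1)]
  have := key (Set.mem_Icc.2 ⟨le_refl s, h1⟩) (Set.mem_Icc.2 ⟨h1, le_refl 1⟩) h1
  have hF1 : F 1 = 0 := by simp [hF]
  have hFs : F s = s - 1 - (1 - s) ^ 2 / 2 - Real.log s := rfl
  rw [hF1] at this
  rw [hFs] at this
  linarith

private lemma factB {u : ℝ} (h0 : 0 ≤ u) (h1 : u ≤ 1) :
    (1 - u) ^ 2 / 2 ≤ u * Real.log u + 1 - u := by
  rcases eq_or_lt_of_le h0 with h | h
  · simp [← h]; norm_num
  set G : ℝ → ℝ := fun x => x * Real.log x + 1 - x - (1 - x) ^ 2 / 2 with hG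
  have hder : ∀ x : ℝ, 0 < x → HasDerivAt G (Real.log x + 1 - x) x := by
    intro x hx0
    have a1 := Real.hasDerivAt_mul_log hx0.ne'
    have a2 : HasDerivAt (fun x : ℝ => 1 - x) (-1) x := (hasDerivAt_id x).const_sub 1
    have a3 := (a2.pow 2).div_const 2
    have := (a1.add a2).sub a3
    have heq : (fun x : ℝ => x * Real.log x + (1 - x) - (1 - x) ^ 2 / 2) = G := by
      funext y; simp [hG]; ring
    rw [← heq]
    refine this.congr_deriv ?_
    norm_num
    ring
  have key : AntitoneOn G (Set.Icc u 1) := by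
    apply antitoneOn_of_deriv_nonpos (convex_Icc u 1)
    · intro x hx
      exact (hder x (lt_of_lt_of_le h hx.1)).differentiableAt.continuousAt.continuousWithinAt
    · intro x hx
      rw [interior_Icc] at hx
      exact (hder x (lt_of_lt_of_le h hx.1.le)).differentiableAt.differentiableWithinAt
    · intro x hx
      rw [interior_Icc] at hx
      have hx0 : 0 < x := lt_of_lt_of_le h hx.1.le
      rw [(hder x hx0).deriv]
      have := Real.log_le_sub_one_of_pos hx0
      linarith
  have := key (Set.mem_Icc.2 ⟨le_refl u, h1⟩) (Set.mem_Icc.2 ⟨h1, le_refl 1⟩) h1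
  have hG1 : G 1 = 0 := by simp [hG]
  rw [hG1] at this
  have hGu : G u = u * Real.log u + 1 - u - (1 - u) ^ 2 / 2 := rfl
  rw [hGu] at this
  linarith

private lemma coordPinsker {x y : ℝ} (hx : 0 < x) (hy : 0 ≤ y) :
    (y - x) ^ 2 / (2 * (x + y)) ≤ y * Real.log (y / x) + x - y := by
  rcases le_or_gt y x with hc | hc
  · -- y ≤ x, use factB with u = y / x
    have hu0 : 0 ≤ y / x := by positivity
    have hu1 : y / x ≤ 1 := by rw [div_le_one hx]; exact hc
    have hB := factB hu0 hu1
    have hmul := mul_le_mul_of_nonneg_left hB hx.le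
    have h1 : x * ((1 - y / x) ^ 2 / 2) = (y - x) ^ 2 / (2 * x) := by
      field_simp; ring
    have h2 : x * (y / x * Real.log (y / x) + 1 - y / x) =
        y * Real.log (y / x) + x - y := by
      field_simp
    rw [h1, h2] at hmul
    have h3 : (y - x) ^ 2 / (2 * (x + y)) ≤ (y - x) ^ 2 / (2 * x) := by
      apply div_le_div_of_nonneg_left (sq_nonneg _) (by positivity)
      linarith
    linarith
  · -- x < y, use factA with s = x / y
    have hy0 : 0 < y := lt_trans hx hc
    have hs0 : 0 < x / y := by positivity
    have hs1 : x / y ≤ 1 := by rw [div_le_one hy0]; exact hc.le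
    have hA := factA hs0 hs1
    have hmul := mul_le_mul_of_nonneg_left hA hy0.le
    have h1 : y * Real.log (x / y) = - (y * Real.log (y / x)) := by
      rw [show Real.log (x / y) = - Real.log (y / x) by
        rw [← Real.log_inv]; congr 1; field_simp]
      ring
    have h2 : y * (x / y - 1 - (1 - x / y) ^ 2 / 2) =
        (x - y) - (y - x) ^ 2 / (2 * y) := by
      field_simp
    rw [h1, h2] at hmul
    have h3 : (y - x) ^ 2 / (2 * (x + y)) ≤ (y - x) ^ 2 / (2 * y) := by
      apply div_le_div_of_nonneg_left (sq_nonneg _) (by positivity)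
      linarith
    linarith
private lemma pinsker_vec {n : ℕ} {x y : Fin n → ℝ} {s : ℝ}
    (hx : ∀ i, 0 < x i) (hy : ∀ i, 0 ≤ y i)
    (hsx : ∑ i, x i = s) (hsy : ∑ i, y i = s) (hs : 0 < s) :
    (∑ i, |y i - x i|) ^ 2 / (4 * s) ≤ KLdiv y x := by
  have hw : ∀ i : Fin n, 0 < x i + y i := fun i => by have := hx i; have := hy i; linarith
  have cs := Finset.sum_mul_sq_le_sq_mul_sq Finset.univ
      (fun i => |y i - x i| / Real.sqrt (x i + y i)) (fun i => Real.sqrt (x i + y i))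
  have h1 : ∀ i : Fin n, |y i - x i| / Real.sqrt (x i + y i) * Real.sqrt (x i + y i)
      = |y i - x i| := fun i =>
    div_mul_cancel₀ _ (ne_of_gt (Real.sqrt_pos.2 (hw i)))
  have h2 : ∀ i : Fin n, (|y i - x i| / Real.sqrt (x i + y i)) ^ 2
      = (y i - x i) ^ 2 / (x i + y i) := by
    intro i
    rw [div_pow, sq_abs, Real.sq_sqrt (hw i).le]
  have h3 : ∀ i : Fin n, (Real.sqrt (x i + y i)) ^ 2 = x i + y i := fun i =>
    Real.sq_sqrt (hw i).le
  rw [Finset.sum_congr rfl (fun i _ => h1 i), Finset.sum_congr rfl (fun i _ => h2 i),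
    Finset.sum_congr rfl (fun i _ => h3 i)] at cs
  have hsum : ∑ i, (x i + y i) = 2 * s := by
    rw [Finset.sum_add_distrib, hsx, hsy]; ring
  rw [hsum] at cs
  have hKL : ∑ i, (y i - x i) ^ 2 / (x i + y i) ≤ 2 * KLdiv y x := by
    unfold KLdiv
    rw [Finset.mul_sum]
    apply Finset.sum_le_sum
    intro i _
    have hcp := coordPinsker (hx i) (hy i)
    have hwi := hw i
    rw [div_le_iff₀ (by linarith : (0:ℝ) < 2 * (x i + y i))] at hcp
    rw [div_le_iff₀ hwi]
    nlinarith
  have hmul := mul_le_mul_of_nonneg_right hKL (by linarith : (0:ℝ) ≤ 2 * s)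
  rw [div_le_iff₀ (by linarith : (0:ℝ) < 4 * s)]
  calc (∑ i, |y i - x i|) ^ 2 ≤ (∑ i, (y i - x i) ^ 2 / (x i + y i)) * (2 * s) := cs
    _ ≤ 2 * KLdiv y x * (2 * s) := hmul
    _ = KLdiv y x * (4 * s) := by ring

private lemma KL_scale {n : ℕ} {κ c : ℝ} (hκ : 0 < κ) (hc0 : 0 < c) (hc1 : c ≤ 1)
    (ν : Fin n → ℝ) (hν : ∀ i, 0 ≤ ν i)
    (hmean : (0:ℝ) ≤ ∑ i, ν i * Real.log (c * ν i / κ)) :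
    KLdiv (fun i => c * ν i) (fun _ => κ) ≤ KLdiv ν (fun _ => κ) := by
  unfold KLdiv
  have key : ∀ i : Fin n,
      c * ν i * Real.log (c * ν i / κ) + κ - c * ν i
        ≤ (ν i * Real.log (ν i / κ) + κ - ν i) - (1 - c) * (ν i * Real.log (c * ν i / κ)) := by
    intro i
    rcases eq_or_lt_of_le (hν i) with h | h
    · simp [← h]
    · -- ν i > 0 : ν i * log (ν i / (c * ν i)) ≥ ν i - c * ν i
      have hbase := klAtom h.le (by positivity : (0:ℝ) < c * ν i)
      have hlog : Real.log (ν i / (c * ν i)) = Real.log (ν i / κ) - Real.log (c * ν i / κ) := by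
        rw [← Real.log_div (by positivity) (by positivity)]
        congr 1
        field_simp
      rw [hlog] at hbase
      nlinarith
  calc ∑ i, (c * ν i * Real.log (c * ν i / κ) + κ - c * ν i)
      ≤ ∑ i, ((ν i * Real.log (ν i / κ) + κ - ν i) - (1 - c) * (ν i * Real.log (c * ν i / κ))) :=
        Finset.sum_le_sum (fun i _ => key i)
    _ = (∑ i, (ν i * Real.log (ν i / κ) + κ - ν i))
        - (1 - c) * ∑ i, ν i * Real.log (c * ν i / κ) := by
        rw [Finset.sum_sub_distrib, Finset.mul_sum]
    _ ≤ ∑ i, (ν i * Real.log (ν i / κ) + κ - ν i) := by nlinarith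
private lemma sum_split {n : ℕ} (f : Fin n → ℝ) (i : Fin n) :
    ∑ j, f j = f i + ∑ j ∈ Finset.univ \ {i}, f j := by
  rw [add_comm, Finset.sum_sdiff_eq_sub (Finset.singleton_subset_iff.2 (Finset.mem_univ i)),
    Finset.sum_singleton]
  ring

private lemma minimizer_pos {n : ℕ} {B : ℝ} {m x : Fin n → ℝ}
    (hm : ∀ i, 0 < m i) (hm1 : ∀ i, m i ≤ 1)
    (hx : IsBddMeasure x) (hxs : B ≤ ∑ i, x i)
    (hmin : ∀ ρ, IsBddMeasure ρ → B ≤ ∑ i, ρ i → KLdiv x m ≤ KLdiv ρ m) :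
    ∀ i, 0 < x i := by
  intro i
  by_contra hcon
  have hxi : x i = 0 := le_antisymm (not_lt.1 hcon) (hx i).1
  set ρ : Fin n → ℝ := Function.update x i (m i / 2) with hρ
  have hρb : IsBddMeasure ρ := by
    intro j
    rcases eq_or_ne j i with h | h
    · rw [h, hρ, Function.update_self]
      have := hm i
      constructor
      · positivity
      · have := hm1 i; linarith
    · rw [hρ, Function.update_of_ne h]; exact hx j
  have hρsum : B ≤ ∑ j, ρ j := by
    rw [hρ, Finset.sum_update_of_mem (Finset.mem_univ i)]
    have := sum_split x i
    rw [hxi] at this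
    have hmi := hm i
    linarith
  have hlt : KLdiv ρ m < KLdiv x m := by
    unfold KLdiv
    rw [sum_split (fun j => ρ j * Real.log (ρ j / m j) + m j - ρ j) i,
      sum_split (fun j => x j * Real.log (x j / m j) + m j - x j) i]
    have hoff : ∑ j ∈ Finset.univ \ {i}, (ρ j * Real.log (ρ j / m j) + m j - ρ j)
        = ∑ j ∈ Finset.univ \ {i}, (x j * Real.log (x j / m j) + m j - x j) := by
      apply Finset.sum_congr rfl
      intro j hj
      have hne : j ≠ i := by
        simpa using (Finset.mem_sdiff.1 hj).2
      rw [hρ]; rw [Function.update_of_ne hne]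
    rw [hoff]
    have hterm : ρ i * Real.log (ρ i / m i) + m i - ρ i
        < x i * Real.log (x i / m i) + m i - x i := by
      rw [hρ, Function.update_self, hxi]
      have hdiv : m i / 2 / m i = 1 / 2 := by
        rw [div_div, mul_comm, ← div_div, div_self (hm i).ne']
      rw [hdiv]
      simp only [zero_mul, zero_div, mul_zero, sub_zero]
      have hlog : Real.log (1 / 2) < 0 := by
        apply Real.log_neg <;> norm_num
      have hmi := hm i
      nlinarith
    linarith
  exact absurd (hmin ρ hρb hρsum) (not_le.2 hlt)

private lemma minimizer_mass {n : ℕ} {B : ℝ} {m x : Fin n → ℝ}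
    (hm : ∀ i, 0 < m i)
    (hms : ∑ i, m i ≤ B)
    (hx : IsBddMeasure x) (hxs : B ≤ ∑ i, x i)
    (hmin : ∀ ρ, IsBddMeasure ρ → B ≤ ∑ i, ρ i → KLdiv x m ≤ KLdiv ρ m) :
    ∑ i, x i = B := by
  refine le_antisymm ?_ hxs
  by_contra hcon
  have hS : B < ∑ i, x i := not_le.1 hcon
  obtain ⟨i, hi⟩ : ∃ i, m i < x i := by
    by_contra hall
    push_neg at hall
    have := Finset.sum_le_sum (fun j (_ : j ∈ Finset.univ) => hall j)
    linarith
  set δ : ℝ := ∑ j, x j - B with hδ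
  have hδ0 : 0 < δ := by rw [hδ]; linarith
  set c : ℝ := max (m i) (x i - δ) with hc
  have hc1 : c < x i := by
    apply max_lt hi
    linarith
  have hc0 : m i ≤ c := le_max_left _ _
  set ρ : Fin n → ℝ := Function.update x i c with hρ
  have hρb : IsBddMeasure ρ := by
    intro j
    rcases eq_or_ne j i with h | h
    · rw [h, hρ, Function.update_self]
      exact ⟨le_trans (hm i).le hc0, le_trans hc1.le (hx i).2⟩
    · rw [hρ, Function.update_of_ne h]; exact hx j
  have hρsum : B ≤ ∑ j, ρ j := by
    rw [hρ, Finset.sum_update_of_mem (Finset.mem_univ i)]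
    have hxi : x i - c ≤ δ := by
      have : x i - δ ≤ c := le_max_right _ _
      linarith
    have := sum_split x i
    rw [hδ] at hxi
    linarith
  -- strict decrease of the KL at coordinate i
  set f : ℝ → ℝ := fun z => z * Real.log z - z * Real.log (m i) + (m i - z) with hf
  have hmono : StrictMonoOn f (Set.Icc (m i) (x i)) := by
    apply strictMonoOn_of_deriv_pos (convex_Icc _ _)
    · apply ContinuousOn.add
      · exact (Real.continuous_mul_log.continuousOn).sub
          ((continuous_id.mul continuous_const).continuousOn)
      · exact (continuous_const.sub continuous_id).continuousOn
    · intro z hz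
      rw [interior_Icc] at hz
      have hz0 : 0 < z := lt_trans (hm i) hz.1
      have hd1 := Real.hasDerivAt_mul_log hz0.ne'
      have hd2 : HasDerivAt (fun z : ℝ => z * Real.log (m i)) (Real.log (m i)) z := by
        simpa using (hasDerivAt_id z).mul_const (Real.log (m i))
      have hd3 : HasDerivAt (fun z : ℝ => m i - z) (-1) z := (hasDerivAt_id z).const_sub _
      have hd : HasDerivAt f (Real.log z + 1 - Real.log (m i) + -1) z :=
        ((hd1.sub hd2).add hd3)
      rw [hd.deriv]
      have := Real.log_lt_log (hm i) hz.1
      linarith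
  have hflt : f c < f (x i) := by
    apply hmono (Set.mem_Icc.2 ⟨hc0, hc1.le⟩) (Set.mem_Icc.2 ⟨hi.le, le_refl _⟩) hc1
  have hlt : KLdiv ρ m < KLdiv x m := by
    unfold KLdiv
    rw [sum_split (fun j => ρ j * Real.log (ρ j / m j) + m j - ρ j) i,
      sum_split (fun j => x j * Real.log (x j / m j) + m j - x j) i]
    have hoff : ∑ j ∈ Finset.univ \ {i}, (ρ j * Real.log (ρ j / m j) + m j - ρ j)
        = ∑ j ∈ Finset.univ \ {i}, (x j * Real.log (x j / m j) + m j - x j) := by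
      apply Finset.sum_congr rfl
      intro j hj
      have hne : j ≠ i := by simpa using (Finset.mem_sdiff.1 hj).2
      rw [hρ]; rw [Function.update_of_ne hne]
    rw [hoff]
    have hcpos : 0 < c := lt_of_lt_of_le (hm i) hc0
    have hxipos : 0 < x i := lt_trans (hm i) hi
    have hlog1 : c * Real.log (c / m i) = c * Real.log c - c * Real.log (m i) := by
      rw [Real.log_div hcpos.ne' (hm i).ne']; ring
    have hlog2 : x i * Real.log (x i / m i)
        = x i * Real.log (x i) - x i * Real.log (m i) := by
      rw [Real.log_div hxipos.ne' (hm i).ne']; ring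
    have h1 : ρ i * Real.log (ρ i / m i) + m i - ρ i = f c := by
      rw [hρ, Function.update_self, hf]
      simp only []
      rw [hlog1]; ring
    have h2 : x i * Real.log (x i / m i) + m i - x i = f (x i) := by
      rw [hf]
      simp only []
      rw [hlog2]; ring
    rw [h1, h2]
    exact add_lt_add_left hflt _
  exact absurd (hmin ρ hρb hρsum) (not_le.2 hlt)
private lemma pythag {n : ℕ} {B : ℝ} {m x ρ : Fin n → ℝ}
    (hm : ∀ i, 0 < m i)
    (hx : IsBddMeasure x) (hxs : B ≤ ∑ i, x i) (hxpos : ∀ i, 0 < x i)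
    (hρ : IsBddMeasure ρ) (hρs : B ≤ ∑ i, ρ i)
    (hmin : ∀ σ, IsBddMeasure σ → B ≤ ∑ i, σ i → KLdiv x m ≤ KLdiv σ m) :
    KLdiv x m + KLdiv ρ x ≤ KLdiv ρ m := by
  classical
  set d : Fin n → ℝ := fun i => ρ i - x i with hd
  set z : ℝ → Fin n → ℝ := fun ε i => x i + ε * d i with hz
  set φ : ℝ → ℝ := fun ε => KLdiv (z ε) m with hφ
  have hz0 : z 0 = x := by funext i; simp [hz]
  have hφ0 : φ 0 = KLdiv x m := by
    rw [show φ 0 = KLdiv (z 0) m from rfl, hz0]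
  have hfeas : ∀ ε : ℝ, 0 ≤ ε → ε ≤ 1 → IsBddMeasure (z ε) ∧ B ≤ ∑ i, z ε i := by
    intro ε h0 h1
    constructor
    · intro i
      have h2 := hx i
      have h3 := hρ i
      have : z ε i = (1 - ε) * x i + ε * ρ i := by simp [hz, hd]; ring
      rw [this]
      constructor
      · have : 0 ≤ (1 - ε) * x i := mul_nonneg (by linarith) h2.1
        have : 0 ≤ ε * ρ i := mul_nonneg h0 h3.1
        linarith
      · nlinarith [h2.2, h3.2]
    · have hsum : ∑ i, z ε i = (1 - ε) * (∑ i, x i) + ε * (∑ i, ρ i) := by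
        rw [hz]
        simp only []
        rw [Finset.sum_add_distrib, ← Finset.mul_sum]
        have : ∑ i, d i = ∑ i, ρ i - ∑ i, x i := by
          rw [hd, Finset.sum_sub_distrib]
        rw [this]; ring
      rw [hsum]
      nlinarith
  have hφmin : ∀ ε : ℝ, 0 ≤ ε → ε ≤ 1 → φ 0 ≤ φ ε := by
    intro ε h0 h1
    obtain ⟨hb, hs⟩ := hfeas ε h0 h1
    rw [hφ0]
    exact hmin _ hb hs
  set D : ℝ := ∑ i, d i * Real.log (x i / m i) with hD
  -- derivative of φ at 0 is D
  have hder : HasDerivAt φ D 0 := by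
    rw [hφ, hD]
    unfold KLdiv
    apply HasDerivAt.fun_sum
    intro i _
    -- affine map
    have haff : HasDerivAt (fun ε : ℝ => x i + ε * d i) (d i) 0 := by
      simpa using ((hasDerivAt_id (0:ℝ)).mul_const (d i)).const_add (x i)
    have hval : x i + 0 * d i = x i := by ring
    have hxi := hxpos i
    have hmlog : HasDerivAt (fun u : ℝ => u * Real.log u) (Real.log (x i) + 1) (x i + 0 * d i) := by
      rw [hval]; exact Real.hasDerivAt_mul_log hxi.ne'
    have hcomp : HasDerivAt (fun ε : ℝ => (x i + ε * d i) * Real.log (x i + ε * d i))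
        ((Real.log (x i) + 1) * d i) 0 := HasDerivAt.comp (h₂ := fun u : ℝ => u * Real.log u) 0 hmlog haff
    have hψ : HasDerivAt
        (fun ε : ℝ => (x i + ε * d i) * Real.log (x i + ε * d i)
          - (x i + ε * d i) * Real.log (m i) + (m i - (x i + ε * d i)))
        ((Real.log (x i) + 1) * d i - d i * Real.log (m i) + (-(d i))) 0 := by
      exact (hcomp.sub (haff.mul_const (Real.log (m i)))).add (haff.const_sub (m i))
    have hev : (fun ε : ℝ => z ε i * Real.log (z ε i / m i) + m i - z ε i)
        =ᶠ[nhds (0:ℝ)] (fun ε : ℝ => (x i + ε * d i) * Real.log (x i + ε * d i)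
          - (x i + ε * d i) * Real.log (m i) + (m i - (x i + ε * d i))) := by
      have hopen : IsOpen {ε : ℝ | 0 < x i + ε * d i} :=
        isOpen_lt continuous_const (continuous_const.add (continuous_id.mul continuous_const))
      have hmem : (0:ℝ) ∈ {ε : ℝ | 0 < x i + ε * d i} := by
        simp [hxi]
      filter_upwards [hopen.mem_nhds hmem] with ε hε
      have hzpos : 0 < x i + ε * d i := hε
      have : z ε i = x i + ε * d i := rfl
      rw [this, Real.log_div hzpos.ne' (hm i).ne']
      ring
    have := hψ.congr_of_eventuallyEq hev
    convert this using 1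
    rw [Real.log_div hxi.ne' (hm i).ne']
    ring
  -- D is nonnegative by minimality
  have hDnn : 0 ≤ D := by
    rw [hasDerivAt_iff_tendsto_slope] at hder
    have hmono : nhdsWithin (0:ℝ) (Set.Ioi 0) ≤ nhdsWithin (0:ℝ) {(0:ℝ)}ᶜ := by
      apply nhdsWithin_mono
      intro y hy
      exact ne_of_gt hy
    have htend := hder.mono_left hmono
    apply ge_of_tendsto htend
    filter_upwards [Ioc_mem_nhdsGT (one_pos)] with ε hε
    have hε0 : 0 < ε := hε.1
    have hslope : slope φ 0 ε = (φ ε - φ 0) / ε := by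
      rw [slope_def_field, sub_zero]
    rw [hslope]
    apply div_nonneg _ hε0.le
    have := hφmin ε hε0.le hε.2
    linarith
  -- the three-point identity
  have hident : KLdiv ρ m = KLdiv x m + KLdiv ρ x + D := by
    unfold KLdiv
    rw [hD]
    rw [← Finset.sum_add_distrib, ← Finset.sum_add_distrib]
    apply Finset.sum_congr rfl
    intro i _
    have hxi := hxpos i
    have hmi := hm i
    rcases eq_or_lt_of_le (hρ i).1 with h | h
    · simp only [hd]
      rw [← h]
      simp only [Real.log_div hxi.ne' hmi.ne']
      ring
    · simp only [hd]
      rw [Real.log_div h.ne' hmi.ne', Real.log_div h.ne' hxi.ne',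
        Real.log_div hxi.ne' hmi.ne']
      ring
  linarith [hident, hDnn]
private lemma KL_shift {n : ℕ} {κ lam : ℝ} (hκ : 0 < κ) (ρ L : Fin n → ℝ)
    (hρ : ∀ i, 0 ≤ ρ i) :
    KLdiv ρ (fun i => Real.exp (-lam * L i) * κ) =
      KLdiv ρ (fun _ => κ) + lam * ∑ i, ρ i * L i
        + ∑ i, (Real.exp (-lam * L i) * κ - κ) := by
  unfold KLdiv
  rw [Finset.mul_sum, ← Finset.sum_add_distrib, ← Finset.sum_add_distrib]
  apply Finset.sum_congr rfl
  intro i _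
  rcases eq_or_lt_of_le (hρ i) with h | h
  · rw [← h]; ring
  · have he : (0:ℝ) < Real.exp (-lam * L i) * κ := by positivity
    rw [Real.log_div h.ne' he.ne', Real.log_div h.ne' hκ.ne',
        Real.log_mul (Real.exp_ne_zero _) hκ.ne', Real.log_exp]
    ring
set_option maxHeartbeats 1600000 in
/-- **Regret bound for lazily projected dense updates.**  With
`μ_t = Π_Γ(e^{−λΣ_{s<t} ℓ_s}·μ₁)`, for every κ-dense measure `μ`,
`(1/T)Σ_t M(μ̂_t, ℓ_t) ≤ (1/T)Σ_t M(μ̂, ℓ_t) + λ + KL(μ‖μ₁)/(λκnT)`. -/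
theorem lazy_dense_regret_bound {n : ℕ} (hn : 0 < n) (T : ℕ) (hT : 1 ≤ T)
    (κ lam : ℝ) (hκ : κ ∈ Set.Ioo (0:ℝ) 1) (hlam : lam ∈ Set.Ioo (0:ℝ) 1)
    (μ₁ : Fin n → ℝ) (hμ₁ : ∀ i, μ₁ i = κ)
    (ℓ : ℕ → Fin n → ℝ)
    (hℓ : ∀ t, 1 ≤ t → t ≤ T → ∀ i, ℓ t i ∈ Set.Icc (0:ℝ) 1)
    (μ : ℕ → Fin n → ℝ)
    (hproj : ∀ t, 1 ≤ t → t ≤ T →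
      IsBregmanProj κ
        (fun i => Real.exp (-lam * ∑ s ∈ Finset.Ico 1 t, ℓ s i) * μ₁ i) (μ t)) :
    ∀ ν : Fin n → ℝ, IsBddMeasure ν → κ * n ≤ ∑ i, ν i →
      (1 / (T : ℝ)) * ∑ t ∈ Finset.Icc 1 T, ∑ i, (μ t i / ∑ k, μ t k) * ℓ t i ≤
        (1 / (T : ℝ)) * (∑ t ∈ Finset.Icc 1 T, ∑ i, (ν i / ∑ k, ν k) * ℓ t i)
          + lam + KLdiv ν μ₁ / (lam * κ * n * T) := by
  obtain ⟨hκ0, hκ1⟩ := hκ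
  obtain ⟨hl0, hl1⟩ := hlam
  have hμ₁' : μ₁ = fun _ => κ := funext hμ₁
  subst hμ₁'
  intro ν hνb hνs
  have hn' : (0:ℝ) < n := by exact_mod_cast hn
  have hT' : (0:ℝ) < T := by exact_mod_cast hT
  set B : ℝ := κ * n with hB
  have hB0 : 0 < B := by positivity
  set m : ℕ → Fin n → ℝ :=
    fun t i => Real.exp (-lam * ∑ s ∈ Finset.Ico 1 t, ℓ s i) * κ with hm
  have hm0 : ∀ t i, 0 < m t i := fun t i => by
    show 0 < Real.exp (-lam * ∑ s ∈ Finset.Ico 1 t, ℓ s i) * κ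
    positivity
  have hmκ : ∀ t, t ≤ T → ∀ i, m t i ≤ κ := by
    intro t ht i
    show Real.exp (-lam * ∑ s ∈ Finset.Ico 1 t, ℓ s i) * κ ≤ κ
    have hsum0 : 0 ≤ ∑ s ∈ Finset.Ico 1 t, ℓ s i := by
      apply Finset.sum_nonneg
      intro s hs
      obtain ⟨hs1, hs2⟩ := Finset.mem_Ico.1 hs
      exact (hℓ s hs1 (le_trans (Nat.le_of_lt_succ (Nat.lt_succ_of_lt hs2)) ht) i).1
    have hexp : Real.exp (-lam * ∑ s ∈ Finset.Ico 1 t, ℓ s i) ≤ 1 := by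
      rw [Real.exp_le_one_iff]
      have : 0 ≤ lam * ∑ s ∈ Finset.Ico 1 t, ℓ s i := by positivity
      linarith
    nlinarith
  have hmsum : ∀ t, t ≤ T → ∑ i, m t i ≤ B := by
    intro t ht
    calc ∑ i, m t i ≤ ∑ _i : Fin n, κ := Finset.sum_le_sum (fun i _ => hmκ t ht i)
      _ = B := by rw [Finset.sum_const, Finset.card_univ, Fintype.card_fin,
            nsmul_eq_mul, hB, mul_comm]
  have hproj' : ∀ t, 1 ≤ t → t ≤ T →
      (IsBddMeasure (μ t) ∧ B ≤ ∑ i, μ t i) ∧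
        ∀ ρ, IsBddMeasure ρ → B ≤ ∑ i, ρ i → KLdiv (μ t) (m t) ≤ KLdiv ρ (m t) := by
    intro t h1 h2
    exact hproj t h1 h2
  have hpos : ∀ t, 1 ≤ t → t ≤ T → ∀ i, 0 < μ t i := by
    intro t h1 h2
    exact minimizer_pos (hm0 t) (fun i => le_trans (hmκ t h2 i) hκ1.le)
      (hproj' t h1 h2).1.1 (hproj' t h1 h2).1.2 (hproj' t h1 h2).2
  have hmass : ∀ t, 1 ≤ t → t ≤ T → ∑ i, μ t i = B := by
    intro t h1 h2
    exact minimizer_mass (hm0 t) (hmsum t h2)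
      (hproj' t h1 h2).1.1 (hproj' t h1 h2).1.2 (hproj' t h1 h2).2
  -- scaled comparator
  set S : ℝ := ∑ i, ν i with hS
  have hSB : B ≤ S := hνs
  have hS0 : 0 < S := lt_of_lt_of_le hB0 hSB
  set c : ℝ := B / S with hc
  have hc0 : 0 < c := by positivity
  have hc1 : c ≤ 1 := by rw [hc, div_le_one hS0]; exact hSB
  set ν' : Fin n → ℝ := fun i => c * ν i with hν'
  have hν'0 : ∀ i, 0 ≤ ν' i := fun i => mul_nonneg hc0.le (hνb i).1
  have hν'b : IsBddMeasure ν' := by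
    intro i
    refine ⟨hν'0 i, ?_⟩
    show c * ν i ≤ 1
    exact mul_le_one₀ hc1 (hνb i).1 (hνb i).2
  have hν'sum : ∑ i, ν' i = B := by
    show ∑ i, c * ν i = B
    rw [← Finset.mul_sum, ← hS, hc]
    field_simp
  -- KL of scaled comparator is smaller
  have hmean : (0:ℝ) ≤ ∑ i, ν i * Real.log (c * ν i / κ) := by
    have key : ∀ i : Fin n, ν i - κ / c ≤ ν i * Real.log (c * ν i / κ) := by
      intro i
      have hatom := klAtom (mul_nonneg hc0.le (hνb i).1) hκ0
      have hκc : c * (κ / c) = κ := by field_simp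
      nlinarith [hatom, hκc, hc0]
    have hsum := Finset.sum_le_sum (fun i (_ : i ∈ Finset.univ) => key i)
    have hconst : ∑ _i : Fin n, (κ / c) = n * (κ / c) := by
      rw [Finset.sum_const, Finset.card_univ, Fintype.card_fin, nsmul_eq_mul]
    have hval : (n:ℝ) * (κ / c) = S := by
      rw [hc, hB]
      field_simp
    rw [Finset.sum_sub_distrib, hconst, hval, ← hS] at hsum
    linarith
  have hKLν : KLdiv ν' (fun _ => κ) ≤ KLdiv ν (fun _ => κ) :=
    KL_scale hκ0 hc0 hc1 ν (fun i => (hνb i).1) hmean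
  -- potential
  set Ψ : (Fin n → ℝ) → ℕ → ℝ :=
    fun ρ t => KLdiv ρ (fun _ => κ) + lam * ∑ i, ρ i * (∑ s ∈ Finset.Ico 1 t, ℓ s i)
    with hΨ
  have hshift : ∀ ρ : Fin n → ℝ, (∀ i, 0 ≤ ρ i) → ∀ t,
      KLdiv ρ (m t) = Ψ ρ t + ∑ i, (m t i - κ) := by
    intro ρ hρ t
    exact KL_shift hκ0 ρ _ hρ
  -- per-step inequality
  have hstepgen : ∀ t, 1 ≤ t → t ≤ T → ∀ y : Fin n → ℝ, IsBddMeasure y →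
      (∑ i, y i = B) →
      lam * ∑ i, μ t i * ℓ t i + Ψ (μ t) t ≤ Ψ y (t + 1) + lam ^ 2 * B := by
    intro t h1 h2 y hyb hysum
    have hyB : B ≤ ∑ i, y i := le_of_eq hysum.symm
    have hpy := pythag (hm0 t) (hproj' t h1 h2).1.1 (hproj' t h1 h2).1.2
      (hpos t h1 h2) hyb hyB (hproj' t h1 h2).2
    rw [hshift (μ t) (fun i => ((hproj' t h1 h2).1.1 i).1) t,
        hshift y (fun i => (hyb i).1) t] at hpy
    have hpy' : Ψ (μ t) t + KLdiv y (μ t) ≤ Ψ y t := by linarith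
    have hΨsucc : Ψ y (t + 1) = Ψ y t + lam * ∑ i, y i * ℓ t i := by
      show KLdiv y (fun _ => κ) + lam * ∑ i, y i * (∑ s ∈ Finset.Ico 1 (t+1), ℓ s i)
        = KLdiv y (fun _ => κ) + lam * ∑ i, y i * (∑ s ∈ Finset.Ico 1 t, ℓ s i)
          + lam * ∑ i, y i * ℓ t i
      have hsucc : ∀ i : Fin n, ∑ s ∈ Finset.Ico 1 (t + 1), ℓ s i
          = (∑ s ∈ Finset.Ico 1 t, ℓ s i) + ℓ t i :=
        fun i => Finset.sum_Ico_succ_top h1 _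
      rw [Finset.sum_congr rfl (fun i _ => by rw [hsucc i])]
      simp only [mul_add]
      rw [Finset.sum_add_distrib]
      ring
    set D : ℝ := ∑ i, |y i - μ t i| with hDdef
    have hpin : D ^ 2 / (4 * B) ≤ KLdiv y (μ t) :=
      pinsker_vec (hpos t h1 h2) (fun i => (hyb i).1) (hmass t h1 h2) hysum hB0
    have hlin : ∑ i, (μ t i - y i) * ℓ t i ≤ D := by
      rw [hDdef]
      apply Finset.sum_le_sum
      intro i _
      have hli := hℓ t h1 h2 i
      rcases le_or_gt (y i) (μ t i) with hcase | hcase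
      · have habs : |y i - μ t i| = μ t i - y i := by
          rw [abs_sub_comm, abs_of_nonneg (by linarith)]
        rw [habs]
        nlinarith [hli.1, hli.2]
      · have habs : (0:ℝ) ≤ |y i - μ t i| := abs_nonneg _
        nlinarith [hli.1, hli.2]
    have hD0 : 0 ≤ D := Finset.sum_nonneg (fun i _ => abs_nonneg _)
    have hamgm : lam * D ≤ D ^ 2 / (4 * B) + lam ^ 2 * B := by
      rw [← sub_nonneg]
      have heq : D ^ 2 / (4 * B) + lam ^ 2 * B - lam * D
          = (D - 2 * lam * B) ^ 2 / (4 * B) := by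
        field_simp
        ring
      rw [heq]
      positivity
    have hmusplit : lam * ∑ i, μ t i * ℓ t i
        = lam * ∑ i, y i * ℓ t i + lam * ∑ i, (μ t i - y i) * ℓ t i := by
      rw [← mul_add, ← Finset.sum_add_distrib]
      congr 1
      apply Finset.sum_congr rfl
      intro i _
      ring
    have hmul := mul_le_mul_of_nonneg_left hlin hl0.le
    calc lam * ∑ i, μ t i * ℓ t i + Ψ (μ t) t
        = Ψ (μ t) t + lam * ∑ i, y i * ℓ t i + lam * ∑ i, (μ t i - y i) * ℓ t i := by
          rw [hmusplit]; ring
      _ ≤ Ψ (μ t) t + lam * ∑ i, y i * ℓ t i + lam * D := by linarith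
      _ ≤ Ψ (μ t) t + lam * ∑ i, y i * ℓ t i + D ^ 2 / (4 * B) + lam ^ 2 * B := by
          linarith
      _ ≤ Ψ (μ t) t + lam * ∑ i, y i * ℓ t i + KLdiv y (μ t) + lam ^ 2 * B := by
          linarith
      _ ≤ Ψ y t + lam * ∑ i, y i * ℓ t i + lam ^ 2 * B := by linarith
      _ = Ψ y (t + 1) + lam ^ 2 * B := by rw [hΨsucc]
  -- telescoping
  set g : ℕ → ℝ := fun t => if t ≤ T then Ψ (μ t) t else Ψ ν' t with hg
  have hstep : ∀ t ∈ Finset.Icc 1 T,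
      lam * ∑ i, μ t i * ℓ t i ≤ g (t + 1) - g t + lam ^ 2 * B := by
    intro t ht
    obtain ⟨h1, h2⟩ := Finset.mem_Icc.1 ht
    have hgt : g t = Ψ (μ t) t := by simp only [hg]; rw [if_pos h2]
    rcases lt_or_eq_of_le h2 with hlt | heq
    · have h2' : t + 1 ≤ T := hlt
      have hgt1 : g (t + 1) = Ψ (μ (t + 1)) (t + 1) := by
        simp only [hg]; rw [if_pos h2']
      have := hstepgen t h1 h2 (μ (t + 1)) (hproj' (t + 1) (by omega) h2').1.1
        (hmass (t + 1) (by omega) h2')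
      rw [hgt, hgt1]
      linarith
    · subst heq
      have hgt1 : g (t + 1) = Ψ ν' (t + 1) := by
        simp only [hg]; rw [if_neg (by omega)]
      have := hstepgen t h1 le_rfl ν' hν'b hν'sum
      rw [hgt, hgt1]
      linarith
  have htel : ∑ t ∈ Finset.Icc 1 T, (g (t + 1) - g t) = g (T + 1) - g 1 := by
    rw [← Finset.Ico_add_one_right_eq_Icc, Finset.sum_Ico_eq_sum_range]
    simp only [Nat.succ_sub_one, Nat.add_sub_cancel]
    rw [Finset.sum_congr rfl (fun k (_ : k ∈ Finset.range T) => by rw [Nat.add_comm 1 k])]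
    exact Finset.sum_range_sub (fun k => g (k + 1)) T
  have hsummed : lam * ∑ t ∈ Finset.Icc 1 T, ∑ i, μ t i * ℓ t i
      ≤ g (T + 1) - g 1 + T * (lam ^ 2 * B) := by
    rw [Finset.mul_sum]
    calc ∑ t ∈ Finset.Icc 1 T, lam * ∑ i, μ t i * ℓ t i
        ≤ ∑ t ∈ Finset.Icc 1 T, (g (t + 1) - g t + lam ^ 2 * B) :=
          Finset.sum_le_sum hstep
      _ = (∑ t ∈ Finset.Icc 1 T, (g (t + 1) - g t))
          + ∑ _t ∈ Finset.Icc 1 T, lam ^ 2 * B := by rw [Finset.sum_add_distrib]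
      _ = g (T + 1) - g 1 + T * (lam ^ 2 * B) := by
          rw [htel, Finset.sum_const, Nat.card_Icc, Nat.add_sub_cancel, nsmul_eq_mul]
  have hg1 : 0 ≤ g 1 := by
    simp only [hg]
    rw [if_pos hT]
    show (0:ℝ) ≤ KLdiv (μ 1) (fun _ => κ)
      + lam * ∑ i, μ 1 i * (∑ s ∈ Finset.Ico 1 1, ℓ s i)
    simp only [Finset.Ico_self, Finset.sum_empty, mul_zero,
      Finset.sum_const_zero, add_zero]
    exact KLdiv_nonneg (fun i => ((hproj' 1 le_rfl hT).1.1 i).1) (fun _ => hκ0)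
  have hgT1 : g (T + 1) = KLdiv ν' (fun _ => κ)
      + lam * ∑ t ∈ Finset.Icc 1 T, ∑ i, ν' i * ℓ t i := by
    simp only [hg]
    rw [if_neg (by omega)]
    show KLdiv ν' (fun _ => κ)
        + lam * ∑ i, ν' i * (∑ s ∈ Finset.Ico 1 (T+1), ℓ s i) = _
    congr 1
    congr 1
    rw [Finset.Ico_add_one_right_eq_Icc]
    rw [Finset.sum_congr rfl (fun i (_ : i ∈ Finset.univ) => Finset.mul_sum _ _ _)]
    exact Finset.sum_comm
  -- main unnormalized bound
  have hmain : lam * ∑ t ∈ Finset.Icc 1 T, ∑ i, μ t i * ℓ t i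
      ≤ KLdiv ν (fun _ => κ) + lam * ∑ t ∈ Finset.Icc 1 T, ∑ i, ν' i * ℓ t i
        + T * (lam ^ 2 * B) := by
    rw [hgT1] at hsummed
    linarith
  set A : ℝ := ∑ t ∈ Finset.Icc 1 T, ∑ i, μ t i * ℓ t i with hA
  set C : ℝ := ∑ t ∈ Finset.Icc 1 T, ∑ i, ν' i * ℓ t i with hC
  have hLHSeq : ∑ t ∈ Finset.Icc 1 T, ∑ i, (μ t i / ∑ k, μ t k) * ℓ t i = A / B := by
    rw [hA, Finset.sum_div]
    apply Finset.sum_congr rfl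
    intro t ht
    obtain ⟨h1, h2⟩ := Finset.mem_Icc.1 ht
    rw [hmass t h1 h2, Finset.sum_div]
    apply Finset.sum_congr rfl
    intro i _
    rw [div_mul_eq_mul_div]
  have hRHSeq : ∑ t ∈ Finset.Icc 1 T, ∑ i, (ν i / ∑ k, ν k) * ℓ t i = C / B := by
    rw [hC, Finset.sum_div]
    apply Finset.sum_congr rfl
    intro t _
    rw [Finset.sum_div]
    apply Finset.sum_congr rfl
    intro i _
    show (ν i / S) * ℓ t i = (c * ν i) * ℓ t i / B
    rw [hc]
    field_simp
  have hABC : A ≤ C + KLdiv ν (fun _ => κ) / lam + T * lam * B := by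
    have hrhs : lam * (C + KLdiv ν (fun _ => κ) / lam + T * lam * B)
        = KLdiv ν (fun _ => κ) + lam * C + T * (lam ^ 2 * B) := by
      field_simp
      ring
    have h2 : lam * A ≤ lam * (C + KLdiv ν (fun _ => κ) / lam + T * lam * B) := by
      rw [hrhs]; linarith [hmain]
    exact le_of_mul_le_mul_left h2 hl0
  rw [hLHSeq, hRHSeq]
  have hBT : (0:ℝ) < B * T := by positivity
  calc (1 / (T:ℝ)) * (A / B) = A / (B * T) := by
        rw [div_mul_div_comm, one_mul, mul_comm (T:ℝ) B]
    _ ≤ (C + KLdiv ν (fun _ => κ) / lam + T * lam * B) / (B * T) :=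
        (div_le_div_iff_of_pos_right hBT).mpr hABC
    _ = (1 / (T:ℝ)) * (C / B) + lam + KLdiv ν (fun _ => κ) / (lam * κ * n * T) := by
        rw [hB]
        field_simp
        ring
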